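/- Let U ⊂ ℂ be open, b : U → ℂ holomorphic and injective, and φ⁺, φ⁻ : U → ℂ holomorphic. For pairwise distinct x_1, ..., x_n ∈ U with x_i + θ ∈ U, define the (possibly complex) weights a_e ∝ ∏_{i<j} (b(x_i + θe_i) − b(x_j + θe_j))/(b(x_i) − b(x_j)) · ∏_i φ⁺(x_i)^{e_i} φ⁻(x_i)^{1−e_i} for e ∈ {0,1}^n, normalized so that ∑_e a_e = 1 (assuming the normalizer is nonzero). Then the function z ↦ ∑_{e ∈ {0,1}^n} a_e [ φ⁺(z) ∏_{j=1}^n (b(z+θ) − b(x_j + θe_j))/(b(z) − b(x_j)) + φ⁻(z) ∏_{j=1}^n (b(z) − b(x_j + θe_j))/(b(z) − b(x_j)) ], which is a priori meromorphic on U with possible simple poles at the points x_i, extends to a holomorphic function on U (all singularities at z = x_i are removable). -/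

import Mathlib

open Finset

open Filter Topology Complex



lemma injOn_deriv_ne_zero {U : Set ℂ} (hU : IsOpen U) {b : ℂ → ℂ}
    (hb : DifferentiableOn ℂ b U) (hbinj : Set.InjOn b U) {x₀ : ℂ} (hx₀ : x₀ ∈ U) :
    deriv b x₀ ≠ 0 := by
  intro hder
  set f : ℂ → ℂ := fun z => b z - b x₀ with hfdef
  have hbU : AnalyticAt ℂ b x₀ := hb.analyticAt (hU.mem_nhds hx₀)
  have hfa : AnalyticAt ℂ f x₀ := hbU.sub analyticAt_const
  have hfx₀ : f x₀ = 0 := sub_self _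
  have hfd : deriv f x₀ = 0 := by
    rw [hfdef]; rw [deriv_sub_const]; exact hder
  have hne : ¬ ∀ᶠ z in 𝓝 x₀, f z = 0 := by
    intro h
    have h1 : ∀ᶠ z in 𝓝[≠] x₀, f z = 0 ∧ z ∈ U :=
      ((h.and (hU.eventually_mem hx₀)).filter_mono nhdsWithin_le_nhds)
    obtain ⟨z, ⟨hz0, hzU⟩, hzne⟩ := (h1.and self_mem_nhdsWithin).exists
    exact hzne (hbinj hzU hx₀ (sub_eq_zero.mp hz0))
  have hord : analyticOrderAt f x₀ ≠ ⊤ := fun h => hne (analyticOrderAt_eq_top.mp h)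
  obtain ⟨m, hm⟩ := WithTop.ne_top_iff_exists.mp hord
  obtain ⟨g, hg, hg0, hfg⟩ := (hfa.analyticOrderAt_eq_natCast (n := m)).1 hm.symm
  have hm0 : m ≠ 0 := by
    rintro rfl
    apply hg0
    have := hfg.self_of_nhds
    simpa [hfx₀] using this.symm
  have hm1 : m ≠ 1 := by
    rintro rfl
    have hd : HasDerivAt (fun z => (z - x₀) ^ 1 • g z)
        (((1:ℂ) * (x₀ - x₀) ^ 0) • g x₀ + (x₀ - x₀) ^ 1 • deriv g x₀) x₀ := by
      have h0 : HasDerivAt (fun z => (z - x₀) * g z) (1 * g x₀ + (x₀ - x₀) * deriv g x₀) x₀ :=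
        ((hasDerivAt_id x₀).sub_const x₀).mul hg.differentiableAt.hasDerivAt
      simp only [pow_one, pow_zero, smul_eq_mul, mul_one]
      exact h0
    have : deriv f x₀ = g x₀ := by
      rw [Filter.EventuallyEq.deriv_eq hfg, hd.deriv]; simp
    exact hg0 (by rw [← this, hfd])
  have hm2 : 2 ≤ m := by omega
  have hmC : (m : ℂ) ≠ 0 := Nat.cast_ne_zero.mpr hm0
  -- collect eventual facts
  have E2 : ∀ᶠ z in 𝓝 x₀, DifferentiableAt ℂ g z :=
    hg.eventually_analyticAt.mono fun z hz => hz.differentiableAt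
  have E3 : ∀ᶠ z in 𝓝 x₀, g z ≠ 0 := hg.continuousAt.eventually_ne hg0
  have E3' : ∀ᶠ z in 𝓝 x₀, g z / g x₀ ∈ slitPlane := by
    have hc : ContinuousAt (fun z => g z / g x₀) x₀ := hg.continuousAt.div_const _
    have h1 : g x₀ / g x₀ = 1 := div_self hg0
    have := hc.preimage_mem_nhds (isOpen_slitPlane.mem_nhds (by rw [h1]; exact one_mem_slitPlane))
    exact this
  have E4 : ∀ᶠ z in 𝓝 x₀, z ∈ U := hU.eventually_mem hx₀
  obtain ⟨V, hVsub, hVopen, hVx⟩ :=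
    eventually_nhds_iff.mp (hfg.and (E2.and (E3.and (E3'.and E4))))
  set α : ℂ := (g x₀) ^ ((m : ℂ)⁻¹) with hα
  have hαm : α ^ m = g x₀ := Complex.cpow_nat_inv_pow _ hm0
  have hα0 : α ≠ 0 := by
    intro h
    apply hg0; rw [← hαm, h, zero_pow hm0]
  set v : ℂ → ℂ := fun z => α * Complex.exp (Complex.log (g z / g x₀) / m) with hv
  set ψ : ℂ → ℂ := fun z => (z - x₀) * v z with hψ
  have hv0 : ∀ z, v z ≠ 0 := fun z => mul_ne_zero hα0 (Complex.exp_ne_zero _)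
  have hψm : ∀ z ∈ V, ψ z ^ m = f z := by
    intro z hz
    obtain ⟨h1, h2, h3, h4, h5⟩ := hVsub z hz
    have hgz : g z / g x₀ ≠ 0 := div_ne_zero h3 hg0
    have hexp : Complex.exp (Complex.log (g z / g x₀) / m) ^ m = g z / g x₀ := by
      rw [← Complex.exp_nat_mul, mul_div_cancel₀ _ hmC, Complex.exp_log hgz]
    calc ψ z ^ m = (z - x₀) ^ m * (α ^ m * Complex.exp (Complex.log (g z / g x₀) / m) ^ m) := by
          simp only [hψ, hv, mul_pow]
      _ = (z - x₀) ^ m * g z := by rw [hαm, hexp, mul_div_cancel₀ _ hg0]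
      _ = f z := by rw [h1, smul_eq_mul]
  have hψdiff : ∀ z ∈ V, DifferentiableAt ℂ ψ z := by
    intro z hz
    obtain ⟨h1, h2, h3, h4, h5⟩ := hVsub z hz
    have : DifferentiableAt ℂ v z := by
      exact (((h2.div_const _).clog h4).div_const _).cexp.const_mul _
    exact ((differentiableAt_id.sub_const _).mul this)
  have hψ0 : ψ x₀ = 0 := by simp [hψ]
  have hψa : AnalyticAt ℂ ψ x₀ :=
    DifferentiableOn.analyticAt (fun z hz => (hψdiff z hz).differentiableWithinAt)
      (hVopen.mem_nhds hVx)
  have hnc : ¬ ∀ᶠ z in 𝓝 x₀, ψ z = ψ x₀ := by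
    intro h
    have h1 : ∀ᶠ z in 𝓝[≠] x₀, ψ z = ψ x₀ := h.filter_mono nhdsWithin_le_nhds
    obtain ⟨z, hz0, hzne⟩ := (h1.and self_mem_nhdsWithin).exists
    rw [hψ0] at hz0
    exact hv0 z (by
      rcases mul_eq_zero.mp hz0 with h | h
      · exact absurd (sub_eq_zero.mp h) hzne
      · exact h)
  have homap : 𝓝 (0 : ℂ) ≤ map ψ (𝓝 x₀) := by
    have := hψa.eventually_constant_or_nhds_le_map_nhds.resolve_left hnc
    rwa [hψ0] at this
  set ω : ℂ := Complex.exp (2 * Real.pi * Complex.I / m) with hω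
  have hωm : ω ^ m = 1 := by
    rw [hω, ← Complex.exp_nat_mul, mul_div_cancel₀ _ hmC, Complex.exp_two_pi_mul_I]
  have hω1 : ω ≠ 1 := by
    intro h
    obtain ⟨k, hk⟩ := Complex.exp_eq_one_iff.mp h
    have h2πI : (2 * Real.pi * Complex.I : ℂ) ≠ 0 := by
      simp [Real.pi_ne_zero, Complex.I_ne_zero]
    have h1 : (1 : ℂ) * (2 * Real.pi * Complex.I) = ((k : ℂ) * m) * (2 * Real.pi * Complex.I) := by
      have h2 := congrArg (fun t => t * (m : ℂ)) hk
      rw [div_mul_cancel₀ _ hmC] at h2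
      linear_combination h2
    have : (k : ℂ) * m = 1 := (mul_right_cancel₀ h2πI h1).symm
    have : ((k * m : ℤ) : ℂ) = ((1 : ℤ) : ℂ) := by push_cast; rw [← this]
    have hkm : k * (m : ℤ) = 1 := Int.cast_injective this
    have : (m : ℤ) ≤ 1 := Int.le_of_dvd one_pos ⟨k, by linarith [hkm]⟩
    omega
  have hS : ψ '' V ∈ 𝓝 (0 : ℂ) := by
    apply homap
    rw [Filter.mem_map]
    exact Filter.mem_of_superset (hVopen.mem_nhds hVx) (Set.subset_preimage_image ψ V)
  have hT : (fun w => ω * w) ⁻¹' (ψ '' V) ∈ 𝓝 (0 : ℂ) := by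
    have hc : ContinuousAt (fun w : ℂ => ω * w) 0 := continuousAt_const.mul continuousAt_id
    apply hc.preimage_mem_nhds
    simpa using hS
  have hST : ψ '' V ∩ (fun w => ω * w) ⁻¹' (ψ '' V) ∈ 𝓝[≠] (0 : ℂ) :=
    mem_nhdsWithin_of_mem_nhds (Filter.inter_mem hS hT)
  obtain ⟨wpt, ⟨hwS, hwT⟩, hw0⟩ :=
    Filter.nonempty_of_mem (Filter.inter_mem hST self_mem_nhdsWithin)
  obtain ⟨z₁, hz₁V, hz₁⟩ := hwS
  obtain ⟨z₂, hz₂V, hz₂⟩ := hwT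
  have hz₁₂ : z₁ ≠ z₂ := by
    intro h
    apply hw0
    have heq : ω * wpt = wpt := by
      have h2 := hz₂.symm
      simp only at h2
      rw [← h, hz₁] at h2
      exact h2
    have h' : (1 - ω) * wpt = 0 := by linear_combination -heq
    rcases mul_eq_zero.mp h' with h'' | h''
    · exact absurd (by linear_combination -h'') hω1
    · exact h''
  have hfz : f z₁ = f z₂ := by
    rw [← hψm z₁ hz₁V, ← hψm z₂ hz₂V, hz₁, hz₂, mul_pow, hωm, one_mul]
  have hbz : b z₁ = b z₂ := by
    have h := hfz
    simp only [hfdef] at h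
    exact sub_left_inj.mp h
  exact hz₁₂ (hbinj (hVsub z₁ hz₁V).2.2.2.2 (hVsub z₂ hz₂V).2.2.2.2 hbz)


private lemma limUnder_local (G g : ℂ → ℂ) (z₀ : ℂ)
    (hg : ∀ᶠ z in 𝓝 z₀, DifferentiableAt ℂ g z)
    (hGg : ∀ᶠ z in 𝓝[≠] z₀, G z = g z) :
    ∀ᶠ z in 𝓝 z₀, limUnder (𝓝[≠] z) G = g z := by
  obtain ⟨V₁, hV₁sub, hV₁open, hV₁x⟩ := eventually_nhds_iff.mp hg
  rw [eventually_nhdsWithin_iff] at hGg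
  obtain ⟨V₂, hV₂sub, hV₂open, hV₂x⟩ := eventually_nhds_iff.mp hGg
  have key : ∀ z ∈ V₁ ∩ V₂, limUnder (𝓝[≠] z) G = g z := by
    intro z hz
    have hgz : ContinuousAt g z := (hV₁sub z hz.1).continuousAt
    have htg : Tendsto g (𝓝[≠] z) (𝓝 (g z)) := hgz.tendsto.mono_left nhdsWithin_le_nhds
    have hGg' : ∀ᶠ wq in 𝓝[≠] z, G wq = g wq := by
      rcases eq_or_ne z z₀ with rfl | hzz
      · filter_upwards [mem_nhdsWithin_of_mem_nhds (hV₂open.mem_nhds hz.2),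
          self_mem_nhdsWithin] with wq hw hw'
        exact hV₂sub wq hw hw'
      · have hmem : V₂ ∩ {z₀}ᶜ ∈ 𝓝 z :=
          (hV₂open.inter isOpen_compl_singleton).mem_nhds ⟨hz.2, hzz⟩
        filter_upwards [mem_nhdsWithin_of_mem_nhds hmem] with wq hw
        exact hV₂sub wq hw.1 hw.2
    exact (htg.congr' (Filter.EventuallyEq.symm hGg')).limUnder_eq
  exact Filter.eventually_of_mem ((hV₁open.inter hV₂open).mem_nhds ⟨hV₁x, hV₂x⟩) key

private lemma pair_prod_reindex {n : ℕ} (i : Fin n) (F : Fin n × Fin n → ℂ) :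
    ∏ p ∈ (univ.filter (fun p : Fin n × Fin n => p.1 < p.2)).filter
        (fun p => ¬(p.1 ≠ i ∧ p.2 ≠ i)), F p
      = ∏ j ∈ univ.erase i, F (if i < j then (i, j) else (j, i)) := by
  have hmem : ∀ p : Fin n × Fin n,
      p ∈ (univ.filter (fun p : Fin n × Fin n => p.1 < p.2)).filter
        (fun p => ¬(p.1 ≠ i ∧ p.2 ≠ i)) ↔ p.1 < p.2 ∧ (p.1 = i ∨ p.2 = i) := by
    intro p
    simp only [mem_filter, mem_univ, true_and, not_and, not_not]
    constructor
    · rintro ⟨h1, h2⟩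
      refine ⟨h1, ?_⟩
      by_cases hc : p.1 = i
      · exact Or.inl hc
      · exact Or.inr (h2 hc)
    · rintro ⟨h1, h2 | h2⟩
      · exact ⟨h1, fun hc => absurd h2 hc⟩
      · exact ⟨h1, fun _ => h2⟩
  have hinv : ∀ p : Fin n × Fin n, p.1 < p.2 → (p.1 = i ∨ p.2 = i) →
      (if i < (if p.1 = i then p.2 else p.1) then (i, if p.1 = i then p.2 else p.1)
        else ((if p.1 = i then p.2 else p.1), i)) = p := by
    rintro p hlt (h1 | h2)
    · have h2 : i < p.2 := h1 ▸ hlt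
      rw [if_pos h1, if_pos h2]
      exact Prod.ext h1.symm rfl
    · have h1 : p.1 ≠ i := by intro hc; rw [hc, h2] at hlt; exact absurd hlt (lt_irrefl i)
      have h3 : ¬ i < p.1 := by intro hc; rw [h2] at hlt; exact absurd (hc.trans hlt) (lt_irrefl i)
      rw [if_neg h1, if_neg h3]
      exact Prod.ext rfl h2.symm
  apply Finset.prod_nbij' (fun p : Fin n × Fin n => if p.1 = i then p.2 else p.1)
      (fun j => if i < j then (i, j) else (j, i))
  · intro p hp
    obtain ⟨hlt, hor⟩ := (hmem p).mp hp
    rcases hor with h1 | h2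
    · have : p.2 ≠ i := by intro hc; rw [h1, hc] at hlt; exact absurd hlt (lt_irrefl i)
      rw [if_pos h1]
      exact mem_erase.mpr ⟨this, mem_univ _⟩
    · have h1 : p.1 ≠ i := by intro hc; rw [hc, h2] at hlt; exact absurd hlt (lt_irrefl i)
      rw [if_neg h1]
      exact mem_erase.mpr ⟨h1, mem_univ _⟩
  · intro j hj
    obtain ⟨hji, -⟩ := mem_erase.mp hj
    apply (hmem _).mpr
    by_cases h : i < j
    · rw [if_pos h]; exact ⟨h, Or.inl rfl⟩
    · rw [if_neg h]; exact ⟨lt_of_le_of_ne (le_of_not_gt h) hji, Or.inr rfl⟩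
  · intro p hp
    obtain ⟨hlt, hor⟩ := (hmem p).mp hp
    exact hinv p hlt hor
  · intro j hj
    obtain ⟨hji, -⟩ := mem_erase.mp hj
    by_cases h : i < j
    · rw [if_pos h]; simp
    · rw [if_neg h]; rw [if_neg hji]
  · intro p hp
    obtain ⟨hlt, hor⟩ := (hmem p).mp hp
    rw [hinv p hlt hor]

private lemma star_identity {n : ℕ} (i : Fin n) (c : Bool → Fin n → ℂ) (d : Fin n → ℂ)
    (P M : Fin n → ℂ) (e : Fin n → Bool) (hei : e i = false) :
    ((∏ p ∈ univ.filter (fun p : Fin n × Fin n => p.1 < p.2),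
        (c (e p.1) p.1 - c (e p.2) p.2) / (d p.1 - d p.2)) *
      ∏ k : Fin n, (if e k then P k else M k)) *
      (P i * ∏ j ∈ univ.erase i, (c true i - c (e j) j) / (d i - d j))
    = ((∏ p ∈ univ.filter (fun p : Fin n × Fin n => p.1 < p.2),
        (c (Function.update e i true p.1) p.1 - c (Function.update e i true p.2) p.2) /
          (d p.1 - d p.2)) *
      ∏ k : Fin n, (if Function.update e i true k then P k else M k)) *
      (M i * ∏ j ∈ univ.erase i, (c false i - c (e j) j) / (d i - d j)) := by
  classical
  set e' : Fin n → Bool := Function.update e i true with he'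
  -- split the pair products
  have hsplit : ∀ E : Fin n → Bool,
      (∏ p ∈ univ.filter (fun p : Fin n × Fin n => p.1 < p.2),
        (c (E p.1) p.1 - c (E p.2) p.2) / (d p.1 - d p.2))
      = (∏ p ∈ (univ.filter (fun p : Fin n × Fin n => p.1 < p.2)).filter
            (fun p => p.1 ≠ i ∧ p.2 ≠ i),
          (c (E p.1) p.1 - c (E p.2) p.2) / (d p.1 - d p.2)) *
        ∏ j ∈ univ.erase i, (c (E i) i - c (E j) j) / (d i - d j) := by
    intro E
    rw [← Finset.prod_filter_mul_prod_filter_not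
      (univ.filter (fun p : Fin n × Fin n => p.1 < p.2)) (fun p => p.1 ≠ i ∧ p.2 ≠ i)]
    congr 1
    rw [pair_prod_reindex i (fun p => (c (E p.1) p.1 - c (E p.2) p.2) / (d p.1 - d p.2))]
    apply Finset.prod_congr rfl
    intro j hj
    obtain ⟨hji, -⟩ := mem_erase.mp hj
    by_cases h : i < j
    · rw [if_pos h]
    · rw [if_neg h]
      show (c (E j) j - c (E i) i) / (d j - d i) = _
      rw [← neg_sub (c (E i) i) (c (E j) j), ← neg_sub (d i) (d j), neg_div_neg_eq]
  rw [hsplit e, hsplit e']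
  -- the common pair product
  have hcommon : (∏ p ∈ (univ.filter (fun p : Fin n × Fin n => p.1 < p.2)).filter
        (fun p => p.1 ≠ i ∧ p.2 ≠ i),
      (c (e' p.1) p.1 - c (e' p.2) p.2) / (d p.1 - d p.2))
      = ∏ p ∈ (univ.filter (fun p : Fin n × Fin n => p.1 < p.2)).filter
          (fun p => p.1 ≠ i ∧ p.2 ≠ i),
        (c (e p.1) p.1 - c (e p.2) p.2) / (d p.1 - d p.2) := by
    apply Finset.prod_congr rfl
    intro p hp
    obtain ⟨-, h1, h2⟩ := mem_filter.mp hp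
    rw [he', Function.update_of_ne h1, Function.update_of_ne h2]
  rw [hcommon]
  -- the phi products
  have hphi_e : (∏ k : Fin n, (if e k then P k else M k))
      = M i * ∏ k ∈ univ.erase i, (if e k then P k else M k) := by
    rw [← Finset.mul_prod_erase univ _ (mem_univ i), hei]
    simp
  have hphi_e' : (∏ k : Fin n, (if e' k then P k else M k))
      = P i * ∏ k ∈ univ.erase i, (if e k then P k else M k) := by
    rw [← Finset.mul_prod_erase univ _ (mem_univ i), he', Function.update_self]
    simp only [if_true]
    congr 1
    apply Finset.prod_congr rfl
    intro k hk
    rw [Function.update_of_ne (mem_erase.mp hk).1]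
  rw [hphi_e, hphi_e']
  -- the i-column products
  have hcol : (∏ j ∈ univ.erase i, (c (e' i) i - c (e' j) j) / (d i - d j))
      = ∏ j ∈ univ.erase i, (c true i - c (e j) j) / (d i - d j) := by
    apply Finset.prod_congr rfl
    intro j hj
    rw [he', Function.update_self, Function.update_of_ne (mem_erase.mp hj).1]
  rw [hcol, hei]
  ring

private lemma div_reassoc (WZ fp fm A B P Q Di : ℂ) (hD : Di ≠ 0) :
    WZ * (fp * (A / Di * P) + fm * (B / Di * Q)) = WZ * (fp * (A * P) + fm * (B * Q)) / Di := by
  field_simp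


/-- the dynamical loop equation.  With normalized (possibly complex)
weights `a_e = w e / ∑ w`, the observable
`z ↦ ∑_e a_e [φ⁺(z) ∏_j (b(z+θ)-b(x_j+θe_j))/(b(z)-b(x_j))
             + φ⁻(z) ∏_j (b(z)-b(x_j+θe_j))/(b(z)-b(x_j))]`,
a priori defined away from the points `x_i`, extends to a holomorphic function on `U`. -/
theorem dynamical_loop_equation (U : Set ℂ) (hU : IsOpen U) (θ : ℝ) (hθ : 0 < θ)
    (hUθ : ∀ z ∈ U, z + (θ : ℂ) ∈ U)
    (b φp φm : ℂ → ℂ)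
    (hb : DifferentiableOn ℂ b U) (hbinj : Set.InjOn b U)
    (hφp : DifferentiableOn ℂ φp U) (hφm : DifferentiableOn ℂ φm U)
    (n : ℕ) (x : Fin n → ℂ) (hxU : ∀ i, x i ∈ U)
    (hxd : ∀ i j, i ≠ j → x i ≠ x j)
    (w : (Fin n → Bool) → ℂ)
    (hw : ∀ e, w e =
      (∏ p ∈ univ.filter (fun p : Fin n × Fin n => p.1 < p.2),
          (b (x p.1 + (θ : ℂ) * (if e p.1 then 1 else 0)) -
              b (x p.2 + (θ : ℂ) * (if e p.2 then 1 else 0))) /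
            (b (x p.1) - b (x p.2))) *
        ∏ k : Fin n, (if e k then φp (x k) else φm (x k)))
    (hZ : (∑ e : Fin n → Bool, w e) ≠ 0) :
    ∃ F : ℂ → ℂ, DifferentiableOn ℂ F U ∧
      ∀ z ∈ U, (∀ i, z ≠ x i) →
        F z = ∑ e : Fin n → Bool,
          (w e / ∑ e' : Fin n → Bool, w e') *
            (φp z * (∏ j : Fin n,
                (b (z + (θ : ℂ)) - b (x j + (θ : ℂ) * (if e j then 1 else 0))) /
                  (b z - b (x j))) +
              φm z * (∏ j : Fin n,
                (b z - b (x j + (θ : ℂ) * (if e j then 1 else 0))) /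
                  (b z - b (x j)))) := by
  classical
  set Z := ∑ e : Fin n → Bool, w e with hZdef
  set G : ℂ → ℂ := fun z => ∑ e : Fin n → Bool,
      (w e / Z) *
        (φp z * (∏ j : Fin n,
            (b (z + (θ : ℂ)) - b (x j + (θ : ℂ) * (if e j then 1 else 0))) /
              (b z - b (x j))) +
          φm z * (∏ j : Fin n,
            (b z - b (x j + (θ : ℂ) * (if e j then 1 else 0))) /
              (b z - b (x j)))) with hGdef
  have hbAt : ∀ z ∈ U, DifferentiableAt ℂ b z := fun z hz => hb.differentiableAt (hU.mem_nhds hz)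
  have hbθAt : ∀ z ∈ U, DifferentiableAt ℂ (fun y => b (y + (θ : ℂ))) z := by
    intro z hz
    exact (hbAt _ (hUθ z hz)).comp z ((differentiable_id.add_const ((θ : ℂ))) z)
  have hφpAt : ∀ z ∈ U, DifferentiableAt ℂ φp z := fun z hz =>
    hφp.differentiableAt (hU.mem_nhds hz)
  have hφmAt : ∀ z ∈ U, DifferentiableAt ℂ φm z := fun z hz =>
    hφm.differentiableAt (hU.mem_nhds hz)
  have hden : ∀ z ∈ U, ∀ j, z ≠ x j → b z - b (x j) ≠ 0 := by
    intro z hz j hzj h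
    exact hzj (hbinj hz (hxU j) (sub_eq_zero.mp h))
  have hGdiff : ∀ z, z ∈ U → (∀ j, z ≠ x j) → DifferentiableAt ℂ G z := by
    intro z hz hzx
    rw [hGdef]
    apply DifferentiableAt.fun_sum
    intro e _
    apply DifferentiableAt.const_mul
    apply DifferentiableAt.add
    · exact (hφpAt z hz).mul (DifferentiableAt.fun_finsetProd (fun j _ =>
        ((hbθAt z hz).sub_const _).div ((hbAt z hz).sub_const _) (hden z hz j (hzx j))))
    · exact (hφmAt z hz).mul (DifferentiableAt.fun_finsetProd (fun j _ =>
        ((hbAt z hz).sub_const _).div ((hbAt z hz).sub_const _) (hden z hz j (hzx j))))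
  have hWopen : IsOpen (U \ Set.range x) := hU.sdiff (Set.finite_range x).isClosed
  have hGevdiff : ∀ z₀, z₀ ∈ U \ Set.range x → ∀ᶠ z in 𝓝 z₀, DifferentiableAt ℂ G z := by
    intro z₀ hz₀
    filter_upwards [hWopen.mem_nhds hz₀] with z hz
    exact hGdiff z hz.1 (fun j hj => hz.2 ⟨j, hj.symm⟩)
  refine ⟨fun z => limUnder (𝓝[≠] z) G, ?_, ?_⟩
  · intro z₀ hz₀
    have hexists : ∃ g : ℂ → ℂ, (∀ᶠ z in 𝓝 z₀, DifferentiableAt ℂ g z) ∧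
        ∀ᶠ z in 𝓝[≠] z₀, G z = g z := by
      by_cases hcase : ∃ i, z₀ = x i
      · obtain ⟨i, rfl⟩ := hcase
        -- local holomorphic extension near x i
        set D : Set ℂ := U \ (x '' {j | j ≠ i}) with hDdef
        have hDopen : IsOpen D := hU.sdiff ((Set.toFinite {j | j ≠ i}).image x).isClosed
        have hxiD : x i ∈ D := by
          refine ⟨hxU i, ?_⟩
          rintro ⟨j, hj, hji⟩
          exact hxd j i hj hji
        have hDU : ∀ z ∈ D, z ∈ U := fun z hz => hz.1
        have hDne : ∀ z ∈ D, ∀ j, j ≠ i → z ≠ x j := by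
          intro z hz j hji h
          exact hz.2 ⟨j, hji, h.symm⟩
        set N : ℂ → ℂ := fun z => ∑ e : Fin n → Bool,
            (w e / Z) *
              (φp z * ((b (z + (θ : ℂ)) - b (x i + (θ : ℂ) * (if e i then 1 else 0))) *
                  ∏ j ∈ univ.erase i,
                    (b (z + (θ : ℂ)) - b (x j + (θ : ℂ) * (if e j then 1 else 0))) /
                      (b z - b (x j))) +
                φm z * ((b z - b (x i + (θ : ℂ) * (if e i then 1 else 0))) *
                  ∏ j ∈ univ.erase i,
                    (b z - b (x j + (θ : ℂ) * (if e j then 1 else 0))) /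
                      (b z - b (x j)))) with hNdef
        have hNdiff : ∀ z ∈ D, DifferentiableAt ℂ N z := by
          intro z hz
          rw [hNdef]
          apply DifferentiableAt.fun_sum
          intro e _
          apply DifferentiableAt.const_mul
          apply DifferentiableAt.add
          · exact (hφpAt z (hDU z hz)).mul
              (((hbθAt z (hDU z hz)).sub_const _).mul
                (DifferentiableAt.fun_finsetProd (fun j hj =>
                  ((hbθAt z (hDU z hz)).sub_const _).div ((hbAt z (hDU z hz)).sub_const _)
                    (hden z (hDU z hz) j (hDne z hz j (mem_erase.mp hj).1)))))
          · exact (hφmAt z (hDU z hz)).mul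
              (((hbAt z (hDU z hz)).sub_const _).mul
                (DifferentiableAt.fun_finsetProd (fun j hj =>
                  ((hbAt z (hDU z hz)).sub_const _).div ((hbAt z (hDU z hz)).sub_const _)
                    (hden z (hDU z hz) j (hDne z hz j (mem_erase.mp hj).1)))))
        have hGN : ∀ z ∈ D, z ≠ x i → G z = N z / (b z - b (x i)) := by
          intro z hz hzi
          have hzU := hDU z hz
          have hD0 : b z - b (x i) ≠ 0 := hden z hzU i hzi
          simp only [hGdef, hNdef]
          rw [Finset.sum_div]
          apply Finset.sum_congr rfl
          intro e _
          rw [← Finset.mul_prod_erase univ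
              (fun j => (b (z + (θ : ℂ)) - b (x j + (θ : ℂ) * (if e j then 1 else 0))) /
                (b z - b (x j))) (mem_univ i),
            ← Finset.mul_prod_erase univ
              (fun j => (b z - b (x j + (θ : ℂ) * (if e j then 1 else 0))) /
                (b z - b (x j))) (mem_univ i)]
          exact div_reassoc _ _ _ _ _ _ _ _ hD0
        have hstar : ∀ e : Fin n → Bool, e i = false →
            w e * (φp (x i) * ∏ j ∈ univ.erase i,
                (b (x i + (θ : ℂ)) - b (x j + (θ : ℂ) * (if e j then 1 else 0))) /
                  (b (x i) - b (x j)))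
            = w (Function.update e i true) * (φm (x i) * ∏ j ∈ univ.erase i,
                (b (x i) - b (x j + (θ : ℂ) * (if e j then 1 else 0))) /
                  (b (x i) - b (x j))) := by
          intro e hei
          rw [hw e, hw (Function.update e i true)]
          have hid := star_identity i
            (fun t j => b (x j + (θ : ℂ) * (if t then 1 else 0)))
            (fun j => b (x j)) (fun j => φp (x j)) (fun j => φm (x j)) e hei
          simpa using hid
        have hre : ∀ F : (Fin n → Bool) → ℂ,
            ∑ e ∈ univ.filter (fun e : Fin n → Bool => ¬ e i = false), F e
            = ∑ e ∈ univ.filter (fun e : Fin n → Bool => e i = false),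
                F (Function.update e i true) := by
          intro F
          apply Finset.sum_nbij' (fun e => Function.update e i false)
            (fun e => Function.update e i true)
          · intro e he
            simp only [mem_filter, mem_univ, true_and] at he ⊢
            simp
          · intro e he
            simp only [mem_filter, mem_univ, true_and] at he ⊢
            simp
          · intro e he
            simp only [mem_filter, mem_univ, true_and] at he
            have h1 : e i = true := by simpa using he
            rw [Function.update_idem, ← h1, Function.update_eq_self]
          · intro e he
            simp only [mem_filter, mem_univ, true_and] at he
            rw [Function.update_idem, ← he, Function.update_eq_self]
          · intro e he
            simp only [mem_filter, mem_univ, true_and] at he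
            have h1 : e i = true := by simpa using he
            have h2 : Function.update (Function.update e i false) i true = e := by
              rw [Function.update_idem, ← h1, Function.update_eq_self]
            rw [h2]
        have hN0 : N (x i) = 0 := by
          simp only [hNdef]
          rw [← Finset.sum_filter_add_sum_filter_not univ (fun e : Fin n → Bool => e i = false)]
          rw [hre _, ← Finset.sum_add_distrib]
          apply Finset.sum_eq_zero
          intro e he
          have hei : e i = false := (mem_filter.mp he).2
          have hPe' : (∏ j ∈ univ.erase i,
              (b (x i + (θ : ℂ)) -
                b (x j + (θ : ℂ) * (if Function.update e i true j then 1 else 0))) /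
                (b (x i) - b (x j)))
              = ∏ j ∈ univ.erase i,
                (b (x i + (θ : ℂ)) - b (x j + (θ : ℂ) * (if e j then 1 else 0))) /
                  (b (x i) - b (x j)) :=
            Finset.prod_congr rfl (fun j hj => by
              rw [Function.update_of_ne (mem_erase.mp hj).1])
          have hQe' : (∏ j ∈ univ.erase i,
              (b (x i) - b (x j + (θ : ℂ) * (if Function.update e i true j then 1 else 0))) /
                (b (x i) - b (x j)))
              = ∏ j ∈ univ.erase i,
                (b (x i) - b (x j + (θ : ℂ) * (if e j then 1 else 0))) /
                  (b (x i) - b (x j)) :=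
            Finset.prod_congr rfl (fun j hj => by
              rw [Function.update_of_ne (mem_erase.mp hj).1])
          have hstar' := hstar e hei
          simp only [hei, Function.update_self, hPe', hQe', Bool.false_eq_true, if_false,
            eq_self_iff_true, if_true, mul_zero, mul_one, add_zero, sub_self, zero_mul]
          linear_combination ((b (x i + (θ : ℂ)) - b (x i)) / Z) * hstar'
        have hderiv0 : deriv b (x i) ≠ 0 := injOn_deriv_ne_zero hU hb hbinj (hxU i)
        have hdsN : DifferentiableOn ℂ (dslope N (x i)) D :=
          (Complex.differentiableOn_dslope (hDopen.mem_nhds hxiD)).mpr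
            (fun z hz => (hNdiff z hz).differentiableWithinAt)
        have hdsb : DifferentiableOn ℂ (dslope b (x i)) U :=
          (Complex.differentiableOn_dslope (hU.mem_nhds (hxU i))).mpr hb
        have hdsb0 : ∀ z ∈ U, dslope b (x i) z ≠ 0 := by
          intro z hz
          rcases eq_or_ne z (x i) with rfl | hne
          · rw [dslope_same]; exact hderiv0
          · rw [dslope_of_ne b hne, slope_def_field]
            exact div_ne_zero (hden z hz i hne) (sub_ne_zero.mpr hne)
        refine ⟨fun z => dslope N (x i) z / dslope b (x i) z, ?_, ?_⟩
        · filter_upwards [hDopen.mem_nhds hxiD] with z hz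
          exact ((hdsN.differentiableAt (hDopen.mem_nhds hz)).div
            (hdsb.differentiableAt (hU.mem_nhds (hDU z hz)))) (hdsb0 z (hDU z hz))
        · filter_upwards [mem_nhdsWithin_of_mem_nhds (hDopen.mem_nhds hxiD),
            self_mem_nhdsWithin] with z hz hzne
          have hzi : z ≠ x i := hzne
          have hzU := hDU z hz
          have h1 : z - x i ≠ 0 := sub_ne_zero.mpr hzi
          have h2 : b z - b (x i) ≠ 0 := hden z hzU i hzi
          rw [hGN z hz hzi, dslope_of_ne N hzi, dslope_of_ne b hzi, slope_def_field,
            slope_def_field, hN0, sub_zero]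
          field_simp
      · push_neg at hcase
        exact ⟨G, hGevdiff z₀ ⟨hz₀, fun ⟨j, hj⟩ => hcase j hj.symm⟩,
          Filter.Eventually.of_forall fun _ => rfl⟩
    obtain ⟨g, hg1, hg2⟩ := hexists
    have hev := limUnder_local G g z₀ hg1 hg2
    exact (DifferentiableAt.congr_of_eventuallyEq hg1.self_of_nhds hev).differentiableWithinAt
  · intro z hz hzx
    have hzW : z ∈ U \ Set.range x := ⟨hz, by rintro ⟨j, rfl⟩; exact hzx j rfl⟩
    have hev := limUnder_local G G z (hGevdiff z hzW) (Filter.Eventually.of_forall fun _ => rfl)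
    have hGz : G z = ∑ e : Fin n → Bool,
      (w e / Z) *
        (φp z * (∏ j : Fin n,
            (b (z + (θ : ℂ)) - b (x j + (θ : ℂ) * (if e j then 1 else 0))) /
              (b z - b (x j))) +
          φm z * (∏ j : Fin n,
            (b z - b (x j + (θ : ℂ) * (if e j then 1 else 0))) /
              (b z - b (x j)))) := by rw [hGdef]
    exact hev.self_of_nhds.trans hGz
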